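/- Let Ω be an open subset of X. If S^D_t φ = S^N_t φ for all φ ∈ L₂(Ω) and all t > 0, then L₂(Ω) is S^N-invariant and cap_Ω(∂Ω) = 0. -/

import Mathlib

open MeasureTheory Filter Topology Set ENNReal
open scoped ENNReal

namespace DirichletPaper

variable {X : Type*} [MeasurableSpace X]

/-- The unit cut-off `0 ∨ φ ∧ 1`. -/
def cut (φ : X → ℝ) : X → ℝ := fun x => max 0 (min (φ x) 1)

/-- A symmetric Dirichlet form on `L₂(X, μ)`, modelled on genuine functions with
all identifications made almost everywhere. -/
structure DirichletForm (μ : Measure X) where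
  dom : Set (X → ℝ)
  form : (X → ℝ) → (X → ℝ) → ℝ
  dom_memLp : ∀ φ ∈ dom, MemLp φ 2 μ
  zero_mem : (0 : X → ℝ) ∈ dom
  add_mem : ∀ φ ∈ dom, ∀ ψ ∈ dom, φ + ψ ∈ dom
  smul_mem : ∀ (c : ℝ), ∀ φ ∈ dom, c • φ ∈ dom
  mul_mem : ∀ φ ∈ dom, ∀ ψ ∈ dom, (∃ C, ∀ᵐ x ∂μ, |φ x| ≤ C) →
    (∃ C, ∀ᵐ x ∂μ, |ψ x| ≤ C) → φ * ψ ∈ dom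
  congr_mem : ∀ φ ∈ dom, ∀ ψ : X → ℝ, ψ =ᵐ[μ] φ → ψ ∈ dom
  congr_form : ∀ φ ∈ dom, ∀ ψ ∈ dom, ∀ φ' ∈ dom, ∀ ψ' ∈ dom, φ' =ᵐ[μ] φ → ψ' =ᵐ[μ] ψ →
    form φ' ψ' = form φ ψ
  symm : ∀ φ ψ, form φ ψ = form ψ φ
  add_left : ∀ φ ∈ dom, ∀ ψ ∈ dom, ∀ χ ∈ dom, form (φ + ψ) χ = form φ χ + form ψ χ
  smul_left : ∀ (c : ℝ), ∀ φ ∈ dom, ∀ ψ ∈ dom, form (c • φ) ψ = c * form φ ψ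
  nonneg : ∀ φ ∈ dom, 0 ≤ form φ φ
  closed : ∀ (f : ℕ → X → ℝ) (φ : X → ℝ), (∀ n, f n ∈ dom) → MemLp φ 2 μ →
    Tendsto (fun n => eLpNorm (f n - φ) 2 μ) atTop (𝓝 0) →
    (∀ ε > 0, ∃ N, ∀ m ≥ N, ∀ n ≥ N, form (f m - f n) (f m - f n) < ε) →
    φ ∈ dom ∧ Tendsto (fun n => form (f n - φ) (f n - φ)) atTop (𝓝 0)
  markov : ∀ φ ∈ dom, cut φ ∈ dom ∧ form (cut φ) (cut φ) ≤ form φ φ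

variable {μ : Measure X}

/-- The quadratic form associated with a Dirichlet form. -/
def DirichletForm.q (E : DirichletForm μ) : (X → ℝ) → ℝ := fun φ => E.form φ φ

/-- Locality: `E(ψ,φ) = 0` whenever `φ ψ = 0`. -/
def IsLocal (E : DirichletForm μ) : Prop :=
  ∀ φ ∈ E.dom, ∀ ψ ∈ E.dom, (∀ᵐ x ∂μ, φ x * ψ x = 0) → E.form ψ φ = 0

/-- Strong locality: `E(φ,ψ) = 0` whenever `(φ + a 1) ψ = 0`. -/
def IsStronglyLocal (E : DirichletForm μ) : Prop :=
  ∀ φ ∈ E.dom, ∀ ψ ∈ E.dom, ∀ a : ℝ, (∀ᵐ x ∂μ, (φ x + a) * ψ x = 0) → E.form φ ψ = 0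

/-- `D(E) ∩ C_c(X)` is dense in `C₀(X)` for the supremum norm. -/
def DenseInC0 [TopologicalSpace X] (E : DirichletForm μ) : Prop :=
  ∀ g : X → ℝ, Continuous g → Tendsto g (cocompact X) (𝓝 0) → ∀ ε > 0,
    ∃ φ ∈ E.dom, Continuous φ ∧ HasCompactSupport φ ∧ ∀ x, |φ x - g x| < ε

/-- Regularity: `D(E) ∩ C_c(X)` is dense in `C₀(X)` (sup norm) and in `D(E)` (graph norm). -/
def IsRegular [TopologicalSpace X] (E : DirichletForm μ) : Prop :=
  DenseInC0 E ∧ ∀ φ ∈ E.dom, ∀ ε > 0, ∃ ψ ∈ E.dom, Continuous ψ ∧ HasCompactSupport ψ ∧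
    (∫ x, (φ x - ψ x) ^ 2 ∂μ) + E.form (φ - ψ) (φ - ψ) < ε

/-- The squared graph norm `‖φ‖₂² + q(φ)` of a quadratic form `q`. -/
noncomputable def graphNormSq (μ : Measure X) (q : (X → ℝ) → ℝ) (φ : X → ℝ) : ℝ :=
  (∫ x, φ x ^ 2 ∂μ) + q φ

/-- `D_Ω`: the elements of the domain whose support is a compact subset of `Ω`. -/
def DOmegaGen [TopologicalSpace X] (dom : Set (X → ℝ)) (Ω : Set X) : Set (X → ℝ) :=
  {φ ∈ dom | IsCompact (tsupport φ) ∧ tsupport φ ⊆ Ω}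

/-- `D(E_D)`: the closure of `D_Ω` with respect to the graph norm. -/
def domDGen [TopologicalSpace X] (μ : Measure X) (dom : Set (X → ℝ)) (q : (X → ℝ) → ℝ)
    (Ω : Set X) : Set (X → ℝ) :=
  {φ ∈ dom | ∃ f : ℕ → X → ℝ, (∀ n, f n ∈ DOmegaGen dom Ω) ∧
    Tendsto (fun n => graphNormSq μ q (f n - φ)) atTop (𝓝 0)}

/-- The domain of the Dirichlet restriction `E_D` of `E` to an open set `Ω`. -/
def DirichletForm.domD [TopologicalSpace X] (E : DirichletForm μ) (Ω : Set X) :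
    Set (X → ℝ) :=
  domDGen μ E.dom E.q Ω

/-- The relative capacity `cap_Ω(A)` of `A ⊆ closure Ω` with respect to a form
with domain `dom` and quadratic part `q`. -/
noncomputable def relCap [TopologicalSpace X] (μ : Measure X) (dom : Set (X → ℝ))
    (q : (X → ℝ) → ℝ) (Ω A : Set X) : ℝ≥0∞ :=
  sInf {r : ℝ≥0∞ | ∃ φ ∈ dom, ∃ V : Set X, IsOpen V ∧ A ⊆ V ∧
    (∀ᵐ x ∂μ, x ∈ V ∩ Ω → 1 ≤ φ x) ∧ r = ENNReal.ofReal (graphNormSq μ q φ)}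

/-- Membership of `L₂(Ω)`, identified with `{1_Ω φ : φ ∈ L₂(X)} ⊆ L₂(X)`. -/
def MemL2 (μ : Measure X) (Ω : Set X) (φ : X → ℝ) : Prop :=
  MemLp φ 2 μ ∧ φ =ᵐ[μ] Ω.indicator φ

/-- A semigroup on `L₂(Y)` (extended to `L₂(X)` by `S_t φ = S_t (1_Y φ)`) is conservative
if `S_t 1_Y = 1_Y` for all `t > 0`. -/
def ConservativeOn (μ : Measure X) (Y : Set X) (S : ℝ → (X → ℝ) → (X → ℝ)) : Prop :=
  ∀ t > 0, S t (Y.indicator fun _ => (1 : ℝ)) =ᵐ[μ] Y.indicator fun _ => (1 : ℝ)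

/-- `S` is the submarkovian semigroup on `L₂(Y)`, extended to `L₂(X)` by
`S_t φ = S_t (1_Y φ)`, associated with the (Dirichlet) form with domain `dom` and
quadratic part `q`; the association is expressed by the standard characterisation
`q(φ) = lim_{t ↓ 0} t⁻¹ (φ, (I - S_t) φ)` with domain the set where the quotients
stay bounded.  The extension of `S` to `L_∞` is pinned down by monotone continuity. -/
structure IsSubmarkovSemigroupOn (μ : Measure X) (Y : Set X) (dom : Set (X → ℝ))
    (q : (X → ℝ) → ℝ) (S : ℝ → (X → ℝ) → (X → ℝ)) : Prop where
  proj : ∀ t > 0, ∀ φ : X → ℝ, S t φ =ᵐ[μ] S t (Y.indicator φ)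
  supported : ∀ t > 0, ∀ φ : X → ℝ, MemLp φ 2 μ → S t φ =ᵐ[μ] Y.indicator (S t φ)
  memLp : ∀ t > 0, ∀ φ : X → ℝ, MemLp φ 2 μ → MemLp (S t φ) 2 μ
  map_add : ∀ t > 0, ∀ φ ψ : X → ℝ, MemLp φ 2 μ → MemLp ψ 2 μ →
    S t (φ + ψ) =ᵐ[μ] S t φ + S t ψ
  map_smul : ∀ t > 0, ∀ (c : ℝ), ∀ φ : X → ℝ, MemLp φ 2 μ → S t (c • φ) =ᵐ[μ] c • S t φ
  semigroup : ∀ s > 0, ∀ t > 0, ∀ φ : X → ℝ, MemLp φ 2 μ →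
    S (s + t) φ =ᵐ[μ] S s (S t φ)
  symmetric : ∀ t > 0, ∀ φ ψ : X → ℝ, MemLp φ 2 μ → MemLp ψ 2 μ →
    ∫ x, S t φ x * ψ x ∂μ = ∫ x, φ x * S t ψ x ∂μ
  contraction : ∀ t > 0, ∀ φ : X → ℝ, MemLp φ 2 μ → eLpNorm (S t φ) 2 μ ≤ eLpNorm φ 2 μ
  submarkov : ∀ t > 0, ∀ φ : X → ℝ, (∀ᵐ x ∂μ, 0 ≤ φ x ∧ φ x ≤ 1) →
    ∀ᵐ x ∂μ, 0 ≤ S t φ x ∧ S t φ x ≤ 1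
  mono : ∀ t > 0, ∀ φ ψ : X → ℝ, φ ≤ᵐ[μ] ψ → S t φ ≤ᵐ[μ] S t ψ
  mono_cont : ∀ t > 0, ∀ (f : ℕ → X → ℝ) (φ : X → ℝ), (∀ n, f n ≤ᵐ[μ] f (n + 1)) →
    (∀ᵐ x ∂μ, Tendsto (fun n => f n x) atTop (𝓝 (φ x))) →
    ∀ᵐ x ∂μ, Tendsto (fun n => S t (f n) x) atTop (𝓝 (S t φ x))
  strong_cont : ∀ φ : X → ℝ, MemLp φ 2 μ →
    Tendsto (fun t => eLpNorm (S t φ - Y.indicator φ) 2 μ) (𝓝[>] 0) (𝓝 0)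
  mem_dom_iff : ∀ φ : X → ℝ, MemLp φ 2 μ → φ =ᵐ[μ] Y.indicator φ →
    ((∃ ψ ∈ dom, φ =ᵐ[μ] ψ) ↔
      BddAbove {r : ℝ | ∃ t > 0, r = t⁻¹ * ∫ x, φ x * (φ x - S t φ x) ∂μ})
  form_eq : ∀ φ ∈ dom, Tendsto (fun t : ℝ => t⁻¹ * ∫ x, φ x * (φ x - S t φ x) ∂μ)
    (𝓝[>] 0) (𝓝 (q φ))

/-- The truncated form `E_χ(φ) = E(χ φ, φ) - 2⁻¹ E(χ, φ²)` on `D(E) ∩ L_∞`. -/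
noncomputable def trunc (E : DirichletForm μ) (χ φ : X → ℝ) : ℝ :=
  E.form (χ * φ) φ - 2⁻¹ * E.form χ (φ * φ)

/-- The bounded truncations of `φ` used to extend `E_χ` by continuity to `D(E)`. -/
noncomputable def truncClip (E : DirichletForm μ) (χ φ : X → ℝ) (m : ℕ) : ℝ :=
  trunc E χ (fun x => max (-(m : ℝ)) (min (φ x) (m : ℝ)))

/-- The extension by continuity of the truncated form `E_χ` to all of `D(E)`. -/
noncomputable def truncExt (E : DirichletForm μ) (χ φ : X → ℝ) : ℝ :=
  limUnder atTop (truncClip E χ φ)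

/-- The convex set `C_Ω = {χ ∈ D(E) ∩ L_∞(X) : 0 ≤ χ ≤ 1_Ω}`. -/
def CSet (E : DirichletForm μ) (Ω : Set X) : Set (X → ℝ) :=
  {χ ∈ E.dom | ∀ᵐ x ∂μ, 0 ≤ χ x ∧ χ x ≤ Ω.indicator (fun _ => (1 : ℝ)) x}

/-- The Neumann form `E_N(φ) = sup {E_χ(φ) : χ ∈ C_Ω}` with domain `D(E)`. -/
noncomputable def neumann (E : DirichletForm μ) (Ω : Set X) (φ : X → ℝ) : ℝ :=
  sSup {r : ℝ | ∃ χ ∈ CSet E Ω, r = truncExt E χ φ}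

/-- The relaxation (lower semicontinuous regularisation) of the quadratic form `q`
with domain `dom`, as an `ℝ≥0∞`-valued function on `L₂`. -/
noncomputable def relaxVal (μ : Measure X) (dom : Set (X → ℝ)) (q : (X → ℝ) → ℝ)
    (φ : X → ℝ) : ℝ≥0∞ :=
  ⨅ (f : ℕ → X → ℝ) (_ : ∀ n, f n ∈ dom)
    (_ : Tendsto (fun n => eLpNorm (f n - φ) 2 μ) atTop (𝓝 0)),
    atTop.liminf fun n => ENNReal.ofReal (q (f n))

/-- The domain of the relaxation of `(dom, q)`. -/
def relaxDom (μ : Measure X) (dom : Set (X → ℝ)) (q : (X → ℝ) → ℝ) : Set (X → ℝ) :=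
  {φ | MemLp φ 2 μ ∧ relaxVal μ dom q φ ≠ ⊤}

/-- The quadratic form of the relaxation of `(dom, q)`. -/
noncomputable def relaxQ (μ : Measure X) (dom : Set (X → ℝ)) (q : (X → ℝ) → ℝ)
    (φ : X → ℝ) : ℝ :=
  (relaxVal μ dom q φ).toReal

/-- Closedness of a quadratic form `q` with domain `dom` on `L₂(X, μ)`. -/
def IsClosedForm (μ : Measure X) (dom : Set (X → ℝ)) (q : (X → ℝ) → ℝ) : Prop :=
  ∀ (f : ℕ → X → ℝ) (φ : X → ℝ), (∀ n, f n ∈ dom) → MemLp φ 2 μ →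
    Tendsto (fun n => eLpNorm (f n - φ) 2 μ) atTop (𝓝 0) →
    (∀ ε > 0, ∃ N, ∀ m ≥ N, ∀ n ≥ N, q (f m - f n) < ε) →
    φ ∈ dom ∧ Tendsto (fun n => q (f n - φ)) atTop (𝓝 0)


section Aux

variable {μ : Measure X}

namespace DirichletForm

lemma neg_mem' (E : DirichletForm μ) {a : X → ℝ} (ha : a ∈ E.dom) : -a ∈ E.dom := by
  have := E.smul_mem (-1) a ha
  rwa [neg_one_smul] at this

lemma sub_mem' (E : DirichletForm μ) {a b : X → ℝ} (ha : a ∈ E.dom) (hb : b ∈ E.dom) :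
    a - b ∈ E.dom := by
  rw [sub_eq_add_neg]
  exact E.add_mem a ha _ (E.neg_mem' hb)

lemma form_smul_right (E : DirichletForm μ) (c : ℝ) {a b : X → ℝ} (ha : a ∈ E.dom)
    (hb : b ∈ E.dom) : E.form a (c • b) = c * E.form a b := by
  rw [E.symm, E.smul_left c b hb a ha, E.symm]

lemma form_add_right (E : DirichletForm μ) {a b c : X → ℝ} (ha : a ∈ E.dom) (hb : b ∈ E.dom)
    (hc : c ∈ E.dom) : E.form a (b + c) = E.form a b + E.form a c := by
  rw [E.symm, E.add_left b hb c hc a ha, E.symm a b, E.symm a c]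

lemma q_neg (E : DirichletForm μ) {a : X → ℝ} (ha : a ∈ E.dom) : E.q (-a) = E.q a := by
  have h1 : -a = (-1 : ℝ) • a := by rw [neg_one_smul]
  show E.form (-a) (-a) = E.form a a
  rw [h1, E.smul_left (-1) a ha _ (E.smul_mem (-1) a ha), E.form_smul_right (-1) ha ha]
  ring

end DirichletForm

end Aux
section Aux2

variable {μ : Measure X}

lemma integrable_mul₂ {f g : X → ℝ} (hf : MemLp f 2 μ) (hg : MemLp g 2 μ) :
    Integrable (fun x => f x * g x) μ := by
  have h : MemLp (f • g) 1 μ := hg.smul (hpqr := ⟨by simp [ENNReal.inv_two_add_inv_two, one_div]⟩) hf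
  have := memLp_one_iff_integrable.mp h
  exact (by simpa [Pi.smul_apply, smul_eq_mul] using this : Integrable (f * g) μ)

namespace DirichletForm

/-- The graph-norm bilinear form. -/
noncomputable def Qb (E : DirichletForm μ) (a b : X → ℝ) : ℝ :=
  (∫ x, a x * b x ∂μ) + E.form a b

lemma Qb_symm (E : DirichletForm μ) (a b : X → ℝ) : E.Qb a b = E.Qb b a := by
  unfold Qb
  rw [E.symm]
  congr 1
  simp_rw [mul_comm]

lemma Qb_self (E : DirichletForm μ) (a : X → ℝ) : E.Qb a a = graphNormSq μ E.q a := by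
  unfold Qb graphNormSq DirichletForm.q
  congr 1
  simp_rw [sq]

lemma Qb_nonneg (E : DirichletForm μ) {a : X → ℝ} (ha : a ∈ E.dom) : 0 ≤ E.Qb a a :=
  add_nonneg (integral_nonneg fun x => mul_self_nonneg _) (E.nonneg a ha)

lemma Qb_add_left (E : DirichletForm μ) {a b c : X → ℝ} (ha : a ∈ E.dom) (hb : b ∈ E.dom)
    (hc : c ∈ E.dom) : E.Qb (a + b) c = E.Qb a c + E.Qb b c := by
  unfold Qb
  rw [E.add_left a ha b hb c hc]
  have :  (∫ x, (a + b) x * c x ∂μ) = (∫ x, a x * c x ∂μ) + ∫ x, b x * c x ∂μ := by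
    rw [← integral_add (integrable_mul₂ (E.dom_memLp a ha) (E.dom_memLp c hc))
      (integrable_mul₂ (E.dom_memLp b hb) (E.dom_memLp c hc))]
    apply integral_congr_ae
    filter_upwards with x
    simp [add_mul]
  rw [this]
  ring

lemma Qb_smul_left (E : DirichletForm μ) (r : ℝ) {a b : X → ℝ} (ha : a ∈ E.dom)
    (hb : b ∈ E.dom) : E.Qb (r • a) b = r * E.Qb a b := by
  unfold Qb
  rw [E.smul_left r a ha b hb]
  have : (∫ x, (r • a) x * b x ∂μ) = r * ∫ x, a x * b x ∂μ := by
    rw [← integral_const_mul]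
    apply integral_congr_ae
    filter_upwards with x
    simp [mul_assoc]
  rw [this]
  ring

lemma Qb_add_right (E : DirichletForm μ) {a b c : X → ℝ} (ha : a ∈ E.dom) (hb : b ∈ E.dom)
    (hc : c ∈ E.dom) : E.Qb a (b + c) = E.Qb a b + E.Qb a c := by
  rw [E.Qb_symm a (b + c), E.Qb_add_left hb hc ha, E.Qb_symm a b, E.Qb_symm a c]

lemma Qb_smul_right (E : DirichletForm μ) (r : ℝ) {a b : X → ℝ} (ha : a ∈ E.dom)
    (hb : b ∈ E.dom) : E.Qb a (r • b) = r * E.Qb a b := by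
  rw [E.Qb_symm, E.Qb_smul_left r hb ha, E.Qb_symm]

lemma Qb_sq_le (E : DirichletForm μ) {a b : X → ℝ} (ha : a ∈ E.dom) (hb : b ∈ E.dom) :
    (E.Qb a b) ^ 2 ≤ E.Qb a a * E.Qb b b := by
  have key : ∀ t : ℝ, 0 ≤ E.Qb b b * (t * t) + (2 * E.Qb a b) * t + E.Qb a a := by
    intro t
    have hmem : t • b ∈ E.dom := E.smul_mem t b hb
    have h0 : 0 ≤ E.Qb (a + t • b) (a + t • b) := E.Qb_nonneg (E.add_mem a ha _ hmem)
    have hexp : E.Qb (a + t • b) (a + t • b)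
        = E.Qb a a + 2 * E.Qb a b * t + E.Qb b b * t ^ 2 := by
      rw [E.Qb_add_left ha hmem (E.add_mem a ha _ hmem),
        E.Qb_add_right ha ha hmem, E.Qb_add_right hmem ha hmem,
        E.Qb_smul_right t ha hb, E.Qb_smul_left t hb ha,
        E.Qb_smul_left t hb hmem, E.Qb_smul_right t hb hb, E.Qb_symm b a]
      ring
    nlinarith [h0, hexp]
  have hd := discrim_le_zero key
  unfold discrim at hd
  nlinarith [hd]

lemma Qb_sqrt_add_le (E : DirichletForm μ) {a b : X → ℝ} (ha : a ∈ E.dom) (hb : b ∈ E.dom) :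
    Real.sqrt (E.Qb (a + b) (a + b))
      ≤ Real.sqrt (E.Qb a a) + Real.sqrt (E.Qb b b) := by
  have hab : E.Qb a b ≤ Real.sqrt (E.Qb a a) * Real.sqrt (E.Qb b b) := by
    have h1 : E.Qb a b ≤ |E.Qb a b| := le_abs_self _
    have h2 : |E.Qb a b| = Real.sqrt ((E.Qb a b) ^ 2) := (Real.sqrt_sq_eq_abs _).symm
    have h3 : Real.sqrt ((E.Qb a b) ^ 2) ≤ Real.sqrt (E.Qb a a * E.Qb b b) :=
      Real.sqrt_le_sqrt (E.Qb_sq_le ha hb)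
    rw [Real.sqrt_mul (E.Qb_nonneg ha)] at h3
    linarith
  have hexp : E.Qb (a + b) (a + b) = E.Qb a a + 2 * E.Qb a b + E.Qb b b := by
    rw [E.Qb_add_left ha hb (E.add_mem a ha b hb), E.Qb_add_right ha ha hb,
      E.Qb_add_right hb ha hb, E.Qb_symm b a]
    ring
  have hle : E.Qb (a + b) (a + b)
      ≤ (Real.sqrt (E.Qb a a) + Real.sqrt (E.Qb b b)) ^ 2 := by
    have sa := Real.sq_sqrt (E.Qb_nonneg ha)
    have sb := Real.sq_sqrt (E.Qb_nonneg hb)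
    nlinarith [hab, hexp]
  calc Real.sqrt (E.Qb (a + b) (a + b))
      ≤ Real.sqrt ((Real.sqrt (E.Qb a a) + Real.sqrt (E.Qb b b)) ^ 2) :=
        Real.sqrt_le_sqrt hle
    _ = |Real.sqrt (E.Qb a a) + Real.sqrt (E.Qb b b)| := Real.sqrt_sq_eq_abs _
    _ = Real.sqrt (E.Qb a a) + Real.sqrt (E.Qb b b) :=
        abs_of_nonneg (add_nonneg (Real.sqrt_nonneg _) (Real.sqrt_nonneg _))

lemma sum_mem' (E : DirichletForm μ) (c : ℕ → X → ℝ) (hc : ∀ k, c k ∈ E.dom) (s : Finset ℕ) :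
    (∑ k ∈ s, c k) ∈ E.dom := by
  classical
  induction s using Finset.induction_on with
  | empty => simpa using E.zero_mem
  | insert _ _ h ih =>
      rw [Finset.sum_insert h]
      exact E.add_mem _ (hc _) _ ih

lemma Qb_sqrt_sum_le (E : DirichletForm μ) (c : ℕ → X → ℝ) (hc : ∀ k, c k ∈ E.dom)
    (s : Finset ℕ) :
    Real.sqrt (E.Qb (∑ k ∈ s, c k) (∑ k ∈ s, c k))
      ≤ ∑ k ∈ s, Real.sqrt (E.Qb (c k) (c k)) := by
  classical
  induction s using Finset.induction_on with
  | empty =>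
      simp only [Finset.sum_empty]
      have : E.Qb (0 : X → ℝ) 0 = 0 := by
        have := E.Qb_smul_left 0 E.zero_mem E.zero_mem
        simpa using this
      simp [this]
  | insert _ _ h ih =>
      rw [Finset.sum_insert h, Finset.sum_insert h]
      exact le_trans (E.Qb_sqrt_add_le (hc _) (E.sum_mem' c hc _))
        (by linarith [ih])

end DirichletForm

end Aux2
section Aux3

variable {μ : Measure X}

lemma integral_mul_self_eq {f : X → ℝ} (hf : MemLp f 2 μ) :
    ∫ x, f x * f x ∂μ = ((eLpNorm f 2 μ).toReal) ^ 2 := by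
  have hmeas := hf.aestronglyMeasurable
  have h1 : ∫ x, f x * f x ∂μ = (∫⁻ x, ENNReal.ofReal (f x * f x) ∂μ).toReal :=
    integral_eq_lintegral_of_nonneg_ae (ae_of_all _ fun x => mul_self_nonneg _)
      (hmeas.mul hmeas)
  have h2 : ∀ x, ENNReal.ofReal (f x * f x) = (‖f x‖₊ : ℝ≥0∞) ^ (2 : ℝ) := by
    intro x
    calc ENNReal.ofReal (f x * f x) = ENNReal.ofReal (|f x| ^ 2) := by rw [sq_abs, sq]
      _ = (ENNReal.ofReal |f x|) ^ 2 := by rw [ENNReal.ofReal_pow (abs_nonneg _)]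
      _ = ((‖f x‖₊ : ℝ≥0∞)) ^ 2 := by rw [← Real.norm_eq_abs, ofReal_norm, enorm_eq_nnnorm]
      _ = (‖f x‖₊ : ℝ≥0∞) ^ (2 : ℝ) := by rw [← ENNReal.rpow_natCast]; norm_num
  have h3 : eLpNorm f 2 μ = (∫⁻ x, (‖f x‖₊ : ℝ≥0∞) ^ (2 : ℝ) ∂μ) ^ (1 / (2 : ℝ)) := by
    rw [eLpNorm_eq_lintegral_rpow_enorm_toReal (by norm_num) (by norm_num)]
    norm_num
    simp only [enorm_eq_nnnorm]
  have h4 : (eLpNorm f 2 μ) ^ (2 : ℕ) = ∫⁻ x, (‖f x‖₊ : ℝ≥0∞) ^ (2 : ℝ) ∂μ := by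
    rw [h3, ← ENNReal.rpow_natCast _ 2, ← ENNReal.rpow_mul]
    norm_num
  rw [h1]
  simp_rw [h2]
  rw [← h4, ENNReal.toReal_pow]

lemma integral_mul_self_le {f g : X → ℝ} (hf : MemLp f 2 μ) (hg : MemLp g 2 μ)
    (h : eLpNorm f 2 μ ≤ eLpNorm g 2 μ) :
    ∫ x, f x * f x ∂μ ≤ ∫ x, g x * g x ∂μ := by
  rw [integral_mul_self_eq hf, integral_mul_self_eq hg]
  have := ENNReal.toReal_mono hg.eLpNorm_ne_top h
  exact pow_le_pow_left₀ ENNReal.toReal_nonneg this 2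

lemma eLpNorm_toReal_le_sqrt_Qb (E : DirichletForm μ) {c : X → ℝ} (hc : c ∈ E.dom) :
    (eLpNorm c 2 μ).toReal ≤ Real.sqrt (E.Qb c c) := by
  have h := integral_mul_self_eq (E.dom_memLp c hc)
  have h2 : (eLpNorm c 2 μ).toReal = Real.sqrt (∫ x, c x * c x ∂μ) := by
    rw [h, Real.sqrt_sq ENNReal.toReal_nonneg]
  rw [h2]
  apply Real.sqrt_le_sqrt
  exact le_add_of_nonneg_right (E.nonneg c hc)

lemma eLpNorm_le_sqrt_Qb (E : DirichletForm μ) {c : X → ℝ} (hc : c ∈ E.dom) :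
    eLpNorm c 2 μ ≤ ENNReal.ofReal (Real.sqrt (E.Qb c c)) := by
  have h := eLpNorm_toReal_le_sqrt_Qb E hc
  have hfin := (E.dom_memLp c hc).eLpNorm_ne_top
  rw [← ENNReal.ofReal_toReal hfin]
  exact ENNReal.ofReal_le_ofReal h

end Aux3
section Aux4

variable [MetricSpace X] [BorelSpace X] [LocallyCompactSpace X] [SigmaCompactSpace X]
variable {μ : Measure X} [Measure.Regular μ] [Measure.IsOpenPosMeasure μ]
variable {E : DirichletForm μ} {Ω : Set X} {SD SN : ℝ → (X → ℝ) → (X → ℝ)}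

/-- Invariance of `L₂(Ω)` under `S^N`. -/
lemma SN_invariant (hSD : IsSubmarkovSemigroupOn μ Ω (E.domD Ω) E.q SD)
    (heq : ∀ t > 0, ∀ φ : X → ℝ, MemL2 μ Ω φ → SD t φ =ᵐ[μ] SN t φ)
    {t : ℝ} (ht : 0 < t) {ξ : X → ℝ} (hξ : MemL2 μ Ω ξ) :
    SN t ξ =ᵐ[μ] Ω.indicator (SN t ξ) := by
  have h1 : SD t ξ =ᵐ[μ] SN t ξ := heq t ht ξ hξ
  have h2 : SD t ξ =ᵐ[μ] Ω.indicator (SD t ξ) := hSD.supported t ht ξ hξ.1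
  have h3 : Ω.indicator (SD t ξ) =ᵐ[μ] Ω.indicator (SN t ξ) := by
    filter_upwards [h1] with x hx
    by_cases hxΩ : x ∈ Ω <;> simp [Set.indicator_apply, hxΩ, hx]
  exact (h1.symm.trans h2).trans h3

/-- `S^N_t` maps `L₂(Ωᶜ)` into itself (orthogonality). -/
lemma SN_perp (hΩ : IsOpen Ω)
    (hSD : IsSubmarkovSemigroupOn μ Ω (E.domD Ω) E.q SD)
    (hSN : IsSubmarkovSemigroupOn μ Set.univ (relaxDom μ E.dom (neumann E Ω))
      (relaxQ μ E.dom (neumann E Ω)) SN)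
    (heq : ∀ t > 0, ∀ φ : X → ℝ, MemL2 μ Ω φ → SD t φ =ᵐ[μ] SN t φ)
    {t : ℝ} (ht : 0 < t) {ζ : X → ℝ} (hζ : MemLp ζ 2 μ) :
    Ω.indicator (SN t (Ωᶜ.indicator ζ)) =ᵐ[μ] 0 := by
  set b := Ωᶜ.indicator ζ with hbdef
  have hb : MemLp b 2 μ := hζ.indicator hΩ.measurableSet.compl
  set w := SN t b with hwdef
  have hw : MemLp w 2 μ := hSN.memLp t ht b hb
  set a := Ω.indicator w with hadef
  have ha : MemLp a 2 μ := hw.indicator hΩ.measurableSet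
  have haeq : Ω.indicator a = a := by rw [hadef, Set.indicator_indicator, Set.inter_self]
  have haL2 : MemL2 μ Ω a := ⟨ha, by rw [haeq]⟩
  have h1 : ∫ x, w x * a x ∂μ = ∫ x, b x * SN t a x ∂μ := hSN.symmetric t ht b a hb ha
  have h2 : SN t a =ᵐ[μ] Ω.indicator (SN t a) := SN_invariant hSD heq ht haL2
  have h3 : ∫ x, b x * SN t a x ∂μ = 0 := by
    have : (fun x => b x * SN t a x) =ᵐ[μ] 0 := by
      filter_upwards [h2] with x hx
      rw [Pi.zero_apply, hx]
      by_cases hxΩ : x ∈ Ω <;>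
        simp [hbdef, Set.indicator_apply, hxΩ]
    rw [integral_congr_ae this]; simp
  have h4 : ∫ x, a x * a x ∂μ = 0 := by
    have : ∀ x, a x * a x = w x * a x := by
      intro x
      by_cases hxΩ : x ∈ Ω <;> simp [hadef, Set.indicator_apply, hxΩ]
    calc ∫ x, a x * a x ∂μ = ∫ x, w x * a x ∂μ := by simp_rw [this]
      _ = 0 := h1.trans h3
  have h5 : (fun x => a x * a x) =ᵐ[μ] 0 := by
    rw [← integral_eq_zero_iff_of_nonneg (fun x => mul_self_nonneg (a x))
      (integrable_mul₂ ha ha)]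
    exact h4
  filter_upwards [h5] with x hx
  exact mul_self_eq_zero.mp hx

end Aux4
section Aux5

variable [MetricSpace X] [BorelSpace X] [LocallyCompactSpace X] [SigmaCompactSpace X]
variable {μ : Measure X} [Measure.Regular μ] [Measure.IsOpenPosMeasure μ]
variable {E : DirichletForm μ} {Ω : Set X} {SD SN : ℝ → (X → ℝ) → (X → ℝ)}

/-- The form quotient of the projection is dominated by the form quotient. -/
lemma quot_proj_le (hΩ : IsOpen Ω)
    (hSD : IsSubmarkovSemigroupOn μ Ω (E.domD Ω) E.q SD)
    (hSN : IsSubmarkovSemigroupOn μ Set.univ (relaxDom μ E.dom (neumann E Ω))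
      (relaxQ μ E.dom (neumann E Ω)) SN)
    (heq : ∀ t > 0, ∀ φ : X → ℝ, MemL2 μ Ω φ → SD t φ =ᵐ[μ] SN t φ)
    {t : ℝ} (ht : 0 < t) {η : X → ℝ} (hη : MemLp η 2 μ) :
    ∫ x, Ω.indicator η x * (Ω.indicator η x - SN t (Ω.indicator η) x) ∂μ
      ≤ ∫ x, η x * (η x - SN t η x) ∂μ := by
  set a := Ω.indicator η with hadef
  set b := Ωᶜ.indicator η with hbdef
  have ha : MemLp a 2 μ := hη.indicator hΩ.measurableSet
  have hb : MemLp b 2 μ := hη.indicator hΩ.measurableSet.compl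
  have hab : a + b = η := by
    funext x
    by_cases hxΩ : x ∈ Ω <;> simp [hadef, hbdef, Set.indicator_apply, hxΩ]
  have haL2 : MemL2 μ Ω a := ⟨ha, by rw [hadef, Set.indicator_indicator, Set.inter_self]⟩
  have hSa : MemLp (SN t a) 2 μ := hSN.memLp t ht a ha
  have hSb : MemLp (SN t b) 2 μ := hSN.memLp t ht b hb
  have hSη : MemLp (SN t η) 2 μ := hSN.memLp t ht η hη
  have key1 : SN t η =ᵐ[μ] SN t a + SN t b := by
    have := hSN.map_add t ht a b ha hb
    rwa [hab] at this
  have key2 : SN t a =ᵐ[μ] Ω.indicator (SN t a) := SN_invariant hSD heq ht haL2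
  have key3 : Ω.indicator (SN t b) =ᵐ[μ] 0 := SN_perp hΩ hSD hSN heq ht hη
  -- cross terms vanish
  have cross1 : ∫ x, a x * SN t b x ∂μ = 0 := by
    have : (fun x => a x * SN t b x) =ᵐ[μ] 0 := by
      filter_upwards [key3] with x hx
      by_cases hxΩ : x ∈ Ω
      · have : Ω.indicator (SN t b) x = SN t b x := Set.indicator_of_mem hxΩ _
        rw [Pi.zero_apply] at hx ⊢
        rw [← this, hx, mul_zero]
      · simp [hadef, Set.indicator_of_notMem hxΩ]
    rw [integral_congr_ae this]; simp
  have cross2 : ∫ x, b x * SN t a x ∂μ = 0 := by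
    have : (fun x => b x * SN t a x) =ᵐ[μ] 0 := by
      filter_upwards [key2] with x hx
      rw [Pi.zero_apply, hx]
      by_cases hxΩ : x ∈ Ω <;> simp [hbdef, Set.indicator_apply, hxΩ]
    rw [integral_congr_ae this]; simp
  -- splitting of the integrals
  have split1 : ∫ x, η x * η x ∂μ = (∫ x, a x * a x ∂μ) + ∫ x, b x * b x ∂μ := by
    rw [← integral_add (integrable_mul₂ ha ha) (integrable_mul₂ hb hb)]
    apply integral_congr_ae
    filter_upwards with x
    by_cases hxΩ : x ∈ Ω <;> simp [hadef, hbdef, Set.indicator_apply, hxΩ]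
  have split2 : ∫ x, η x * SN t η x ∂μ
      = (∫ x, a x * SN t a x ∂μ) + ∫ x, b x * SN t b x ∂μ := by
    have e1 : ∫ x, η x * SN t η x ∂μ
        = ∫ x, (a x * SN t a x + a x * SN t b x) + (b x * SN t a x + b x * SN t b x) ∂μ := by
      apply integral_congr_ae
      filter_upwards [key1] with x hx
      rw [hx, ← hab]
      simp only [Pi.add_apply]
      ring
    have i1 : Integrable (fun x => a x * SN t a x) μ := integrable_mul₂ ha hSa
    have i2 : Integrable (fun x => a x * SN t b x) μ := integrable_mul₂ ha hSb
    have i3 : Integrable (fun x => b x * SN t a x) μ := integrable_mul₂ hb hSa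
    have i4 : Integrable (fun x => b x * SN t b x) μ := integrable_mul₂ hb hSb
    have i12 : Integrable (fun x => a x * SN t a x + a x * SN t b x) μ := i1.add i2
    have i34 : Integrable (fun x => b x * SN t a x + b x * SN t b x) μ := i3.add i4
    rw [e1, integral_add i12 i34, integral_add i1 i2, integral_add i3 i4, cross1, cross2]
    ring
  -- positivity of the b-part
  have posb : ∫ x, b x * SN t b x ∂μ ≤ ∫ x, b x * b x ∂μ := by
    set g := SN (t / 2) b with hgdef
    have hg : MemLp g 2 μ := hSN.memLp (t / 2) (by linarith) b hb
    have sg : SN t b =ᵐ[μ] SN (t / 2) g := by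
      have := hSN.semigroup (t / 2) (by linarith) (t / 2) (by linarith) b hb
      rwa [add_halves] at this
    have e2 : ∫ x, b x * SN t b x ∂μ = ∫ x, b x * SN (t / 2) g x ∂μ := by
      apply integral_congr_ae
      filter_upwards [sg] with x hx
      rw [hx]
    have e3 : ∫ x, b x * SN (t / 2) g x ∂μ = ∫ x, g x * g x ∂μ := by
      have h := hSN.symmetric (t / 2) (by linarith) g b hg hb
      calc ∫ x, b x * SN (t / 2) g x ∂μ = ∫ x, SN (t / 2) g x * b x ∂μ := by
            simp_rw [mul_comm]
        _ = ∫ x, g x * SN (t / 2) b x ∂μ := h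
        _ = ∫ x, g x * g x ∂μ := by rw [hgdef]
    have e4 : ∫ x, g x * g x ∂μ ≤ ∫ x, b x * b x ∂μ :=
      integral_mul_self_le hg hb (hSN.contraction (t / 2) (by linarith) b hb)
    rw [e2, e3]
    exact e4
  -- assemble
  have expand1 : ∫ x, η x * (η x - SN t η x) ∂μ
      = (∫ x, η x * η x ∂μ) - ∫ x, η x * SN t η x ∂μ := by
    rw [← integral_sub (integrable_mul₂ hη hη) (integrable_mul₂ hη hSη)]
    apply integral_congr_ae
    filter_upwards with x
    ring
  have expand2 : ∫ x, a x * (a x - SN t a x) ∂μ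
      = (∫ x, a x * a x ∂μ) - ∫ x, a x * SN t a x ∂μ := by
    rw [← integral_sub (integrable_mul₂ ha ha) (integrable_mul₂ ha hSa)]
    apply integral_congr_ae
    filter_upwards with x
    ring
  rw [expand1, expand2, split1, split2]
  have : ∫ x, b x * SN t b x ∂μ ≤ ∫ x, b x * b x ∂μ := posb
  linarith

end Aux5
section Aux6

variable [MetricSpace X] [BorelSpace X] [LocallyCompactSpace X] [SigmaCompactSpace X]
variable {μ : Measure X} [Measure.Regular μ] [Measure.IsOpenPosMeasure μ]
variable {E : DirichletForm μ} {Ω : Set X} {SD SN : ℝ → (X → ℝ) → (X → ℝ)}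

lemma mem_relaxDom_of_mem_dom {η : X → ℝ} (hη : η ∈ E.dom) :
    η ∈ relaxDom μ E.dom (neumann E Ω) := by
  refine ⟨E.dom_memLp η hη, ?_⟩
  have h1 : relaxVal μ E.dom (neumann E Ω) η
      ≤ atTop.liminf fun _ : ℕ => ENNReal.ofReal (neumann E Ω η) := by
    refine le_trans (iInf_le _ fun _ : ℕ => η) ?_
    refine le_trans (iInf_le _ fun _ => hη) ?_
    refine le_trans (iInf_le _ ?_) le_rfl
    simp [sub_self]
  rw [Filter.liminf_const] at h1
  exact ne_top_of_le_ne_top ENNReal.ofReal_ne_top h1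

lemma quot_bddAbove_of_mem_dom
    (hSN : IsSubmarkovSemigroupOn μ Set.univ (relaxDom μ E.dom (neumann E Ω))
      (relaxQ μ E.dom (neumann E Ω)) SN)
    {η : X → ℝ} (hη : η ∈ E.dom) :
    BddAbove {r : ℝ | ∃ t > 0, r = t⁻¹ * ∫ x, η x * (η x - SN t η x) ∂μ} := by
  have hη2 := E.dom_memLp η hη
  have huniv : η =ᵐ[μ] Set.univ.indicator η := by
    rw [Set.indicator_univ]
  exact (hSN.mem_dom_iff η hη2 huniv).mp ⟨η, mem_relaxDom_of_mem_dom hη, .rfl⟩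

/-- The key step: `1_Ω η` belongs (up to null sets) to the Dirichlet domain `D(E_D)`. -/
lemma indicator_mem_domD (hΩ : IsOpen Ω)
    (hSD : IsSubmarkovSemigroupOn μ Ω (E.domD Ω) E.q SD)
    (hSN : IsSubmarkovSemigroupOn μ Set.univ (relaxDom μ E.dom (neumann E Ω))
      (relaxQ μ E.dom (neumann E Ω)) SN)
    (heq : ∀ t > 0, ∀ φ : X → ℝ, MemL2 μ Ω φ → SD t φ =ᵐ[μ] SN t φ)
    {η : X → ℝ} (hη : η ∈ E.dom) :
    ∃ ψ ∈ E.domD Ω, Ω.indicator η =ᵐ[μ] ψ := by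
  set a := Ω.indicator η with hadef
  have hη2 := E.dom_memLp η hη
  have ha : MemLp a 2 μ := hη2.indicator hΩ.measurableSet
  have haeq : Ω.indicator a = a := by rw [hadef, Set.indicator_indicator, Set.inter_self]
  have haind : a =ᵐ[μ] Ω.indicator a := by rw [haeq]
  have haL2 : MemL2 μ Ω a := ⟨ha, haind⟩
  obtain ⟨B, hB⟩ := quot_bddAbove_of_mem_dom hSN hη
  have hbdd : BddAbove {r : ℝ | ∃ t > 0, r = t⁻¹ * ∫ x, a x * (a x - SD t a x) ∂μ} := by
    refine ⟨B, ?_⟩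
    rintro r ⟨t, ht, rfl⟩
    have e1 : SD t a =ᵐ[μ] SN t a := heq t ht a haL2
    have e2 : ∫ x, a x * (a x - SD t a x) ∂μ = ∫ x, a x * (a x - SN t a x) ∂μ := by
      apply integral_congr_ae
      filter_upwards [e1] with x hx
      rw [hx]
    have e3 : ∫ x, a x * (a x - SN t a x) ∂μ ≤ ∫ x, η x * (η x - SN t η x) ∂μ :=
      quot_proj_le hΩ hSD hSN heq ht hη2
    have e4 : t⁻¹ * ∫ x, η x * (η x - SN t η x) ∂μ ≤ B :=
      hB ⟨t, ht, rfl⟩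
    calc t⁻¹ * ∫ x, a x * (a x - SD t a x) ∂μ
        = t⁻¹ * ∫ x, a x * (a x - SN t a x) ∂μ := by rw [e2]
      _ ≤ t⁻¹ * ∫ x, η x * (η x - SN t η x) ∂μ :=
          mul_le_mul_of_nonneg_left e3 (inv_nonneg.mpr ht.le)
      _ ≤ B := e4
  exact (hSD.mem_dom_iff a ha haind).mpr hbdd

end Aux6
section Aux7

variable {μ : Measure X}

lemma graphNormSq_sub_comm (E : DirichletForm μ) {a b : X → ℝ} (ha : a ∈ E.dom)
    (hb : b ∈ E.dom) : graphNormSq μ E.q (a - b) = graphNormSq μ E.q (b - a) := by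
  unfold graphNormSq
  congr 1
  · apply integral_congr_ae
    filter_upwards with x
    have : (a - b) x = -((b - a) x) := by simp
    rw [this, neg_sq]
  · have h1 : a - b = -(b - a) := by rw [neg_sub]
    rw [h1]
    exact E.q_neg (E.sub_mem' hb ha)

end Aux7

section Aux8

variable [MetricSpace X] [BorelSpace X] [LocallyCompactSpace X] [SigmaCompactSpace X]
variable {μ : Measure X} [Measure.Regular μ] [Measure.IsOpenPosMeasure μ]
variable {E : DirichletForm μ} {Ω : Set X} {SD SN : ℝ → (X → ℝ) → (X → ℝ)}

/-- Per-compact small-capacity witnesses. -/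
lemma percompact_witness (hdense : DenseInC0 E) (hΩ : IsOpen Ω)
    (hSD : IsSubmarkovSemigroupOn μ Ω (E.domD Ω) E.q SD)
    (hSN : IsSubmarkovSemigroupOn μ Set.univ (relaxDom μ E.dom (neumann E Ω))
      (relaxQ μ E.dom (neumann E Ω)) SN)
    (heq : ∀ t > 0, ∀ φ : X → ℝ, MemL2 μ Ω φ → SD t φ =ᵐ[μ] SN t φ)
    {K : Set X} (hK : IsCompact K) (hKb : K ⊆ frontier Ω) {δ : ℝ} (hδ : 0 < δ) :
    ∃ φ ∈ E.dom, ∃ V : Set X, IsOpen V ∧ K ⊆ V ∧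
      (∀ᵐ x ∂μ, x ∈ V ∩ Ω → 1 ≤ φ x) ∧ graphNormSq μ E.q φ < δ := by
  -- a continuous bump which is large on a neighbourhood of K
  obtain ⟨g, hg1, -, hgsupp, hg01⟩ :=
    exists_continuous_one_zero_of_isCompact hK isClosed_empty (disjoint_bot_right)
  have hg3cont : Continuous fun x => 3 * g x := by continuity
  have hg3tend : Tendsto (fun x => 3 * g x) (cocompact X) (𝓝 0) := by
    have h0 : Tendsto g (cocompact X) (𝓝 0) := hgsupp.is_zero_at_infty
    have := h0.const_mul (3 : ℝ)
    simpa using this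
  obtain ⟨η₀, hη₀dom, hη₀cont, -, hη₀close⟩ :=
    hdense (fun x => 3 * g x) hg3cont hg3tend 1 one_pos
  set U := {x | 2 < η₀ x} with hUdef
  have hUopen : IsOpen U := isOpen_lt continuous_const hη₀cont
  have hKU : K ⊆ U := by
    intro x hx
    have hgx : g x = 1 := hg1 hx
    have := hη₀close x
    rw [hgx] at this
    have : |η₀ x - 3| < 1 := by simpa using this
    have := abs_lt.mp this
    simp only [hUdef, Set.mem_setOf_eq]
    linarith [this.1]
  set η := (2⁻¹ : ℝ) • η₀ with hηdef
  have hηdom : η ∈ E.dom := E.smul_mem _ _ hη₀dom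
  have hηU : ∀ x ∈ U, 1 ≤ η x := by
    intro x hx
    simp only [hUdef, Set.mem_setOf_eq] at hx
    simp only [hηdef, Pi.smul_apply, smul_eq_mul]
    linarith
  -- 1_Ω η lies in the Dirichlet space
  obtain ⟨ψ, hψD, hae⟩ := indicator_mem_domD hΩ hSD hSN heq hηdom
  obtain ⟨hψdom, f, hf, hconv⟩ := hψD
  -- choose a good approximant
  have : ∀ᶠ n in atTop, graphNormSq μ E.q (f n - ψ) < δ :=
    hconv.eventually_lt_const hδ
  obtain ⟨n, hn⟩ := this.exists
  obtain ⟨hfn_dom, hfn_cpt, hfn_sub⟩ := hf n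
  refine ⟨ψ - f n, E.sub_mem' hψdom hfn_dom, U \ tsupport (f n),
    hUopen.sdiff (isClosed_tsupport _), ?_, ?_, ?_⟩
  · intro x hx
    refine ⟨hKU hx, fun hmem => ?_⟩
    have hxΩ : x ∈ Ω := hfn_sub hmem
    have hxfr : x ∈ frontier Ω := hKb hx
    rw [hΩ.frontier_eq] at hxfr
    exact hxfr.2 hxΩ
  · filter_upwards [hae] with x hx hxmem
    obtain ⟨⟨hxU, hxsupp⟩, hxΩ⟩ := hxmem
    have hfnx : f n x = 0 := image_eq_zero_of_notMem_tsupport hxsupp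
    have hψx : ψ x = η x := by
      rw [← hx, Set.indicator_of_mem hxΩ]
    have : (ψ - f n) x = η x := by
      simp [Pi.sub_apply, hfnx, hψx]
    rw [this]
    exact hηU x hxU
  · rw [graphNormSq_sub_comm E hψdom hfn_dom]
    exact hn

end Aux8
section Aux9

lemma cut_nonneg (φ : X → ℝ) (x : X) : 0 ≤ cut φ x := le_max_left _ _

lemma cut_eq_one {φ : X → ℝ} {x : X} (h : 1 ≤ φ x) : cut φ x = 1 := by
  unfold cut
  rw [min_eq_right h, max_eq_right zero_le_one]

lemma cut_sq_le (φ : X → ℝ) (x : X) : (cut φ x) ^ 2 ≤ (φ x) ^ 2 := by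
  unfold cut
  rcases le_total (φ x) 0 with h | h
  · rw [min_eq_left (h.trans zero_le_one), max_eq_left h]
    simpa using sq_nonneg (φ x)
  · rcases le_total (φ x) 1 with h1 | h1
    · rw [min_eq_left h1, max_eq_right h]
    · rw [min_eq_right h1, max_eq_right zero_le_one]
      nlinarith

variable {μ : Measure X}

lemma geom_tail_le (ε' : ℝ) (hε' : 0 ≤ ε') (a b : ℕ) :
    ∑ k ∈ Finset.Ico a b, ε' * (1 / 2 : ℝ) ^ k ≤ 2 * ε' * (1 / 2 : ℝ) ^ a := by
  rcases le_or_gt a b with hab | hab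
  · rw [Finset.sum_Ico_eq_sum_range]
    have : ∀ i, ε' * (1 / 2 : ℝ) ^ (a + i) = (ε' * (1 / 2) ^ a) * (1 / 2) ^ i := by
      intro i; rw [pow_add]; ring
    simp_rw [this]
    rw [← Finset.mul_sum]
    have hg : ∑ i ∈ Finset.range (b - a), ((1 : ℝ) / 2) ^ i ≤ 2 := sum_geometric_two_le _
    have h0 : 0 ≤ ε' * (1 / 2 : ℝ) ^ a := by positivity
    nlinarith
  · rw [Finset.Ico_eq_empty (by omega)]
    simp only [Finset.sum_empty]
    positivity

end Aux9
section Aux10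

variable [MetricSpace X] [BorelSpace X] [LocallyCompactSpace X] [SigmaCompactSpace X]
variable {μ : Measure X} [Measure.Regular μ] [Measure.IsOpenPosMeasure μ]
variable {E : DirichletForm μ} {Ω : Set X} {SD SN : ℝ → (X → ℝ) → (X → ℝ)}

/-- Global small-capacity witnesses for the whole boundary. -/
lemma global_witness (hdense : DenseInC0 E) (hΩ : IsOpen Ω)
    (hSD : IsSubmarkovSemigroupOn μ Ω (E.domD Ω) E.q SD)
    (hSN : IsSubmarkovSemigroupOn μ Set.univ (relaxDom μ E.dom (neumann E Ω))
      (relaxQ μ E.dom (neumann E Ω)) SN)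
    (heq : ∀ t > 0, ∀ φ : X → ℝ, MemL2 μ Ω φ → SD t φ =ᵐ[μ] SN t φ)
    {ε' : ℝ} (hε' : 0 < ε') :
    ∃ φ ∈ E.dom, ∃ V : Set X, IsOpen V ∧ frontier Ω ⊆ V ∧
      (∀ᵐ x ∂μ, x ∈ V ∩ Ω → 1 ≤ φ x) ∧ graphNormSq μ E.q φ ≤ (2 * ε') ^ 2 := by
  classical
  -- compact exhaustion of the boundary
  set K : ℕ → Set X := fun k => compactCovering X k ∩ frontier Ω with hKdef
  have hKcomp : ∀ k, IsCompact (K k) := fun k =>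
    (isCompact_compactCovering X k).inter_right isClosed_frontier
  have hKsub : ∀ k, K k ⊆ frontier Ω := fun k => Set.inter_subset_right
  have hKcover : frontier Ω ⊆ ⋃ k, K k := by
    intro x hx
    have : x ∈ ⋃ n, compactCovering X n := by
      rw [iUnion_compactCovering]; trivial
    obtain ⟨n, hn⟩ := Set.mem_iUnion.mp this
    exact Set.mem_iUnion.mpr ⟨n, hn, hx⟩
  -- small witnesses for each compact piece
  have hδ : ∀ k : ℕ, (0 : ℝ) < (ε' * (1 / 2) ^ k) ^ 2 := by
    intro k; positivity
  have hwit : ∀ k : ℕ, ∃ φ ∈ E.dom, ∃ V : Set X, IsOpen V ∧ K k ⊆ V ∧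
      (∀ᵐ x ∂μ, x ∈ V ∩ Ω → 1 ≤ φ x) ∧ graphNormSq μ E.q φ < (ε' * (1 / 2) ^ k) ^ 2 :=
    fun k => percompact_witness hdense hΩ hSD hSN heq (hKcomp k) (hKsub k) (hδ k)
  choose φ hφdom V hVopen hKV hVae hVnorm using hwit
  -- truncated witnesses
  set c : ℕ → X → ℝ := fun k => cut (φ k) with hcdef
  have hcdom : ∀ k, c k ∈ E.dom := fun k => (E.markov (φ k) (hφdom k)).1
  have hcnorm : ∀ k, graphNormSq μ E.q (c k) < (ε' * (1 / 2) ^ k) ^ 2 := by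
    intro k
    refine lt_of_le_of_lt ?_ (hVnorm k)
    unfold graphNormSq
    have h1 : ∫ x, c k x ^ 2 ∂μ ≤ ∫ x, φ k x ^ 2 ∂μ := by
      apply integral_mono ?_ ?_ (fun x => cut_sq_le (φ k) x)
      · have := integrable_mul₂ (E.dom_memLp _ (hcdom k)) (E.dom_memLp _ (hcdom k))
        apply this.congr
        filter_upwards with x
        rw [sq]
      · have := integrable_mul₂ (E.dom_memLp _ (hφdom k)) (E.dom_memLp _ (hφdom k))
        apply this.congr
        filter_upwards with x
        rw [sq]
    have h2 : E.q (c k) ≤ E.q (φ k) := (E.markov (φ k) (hφdom k)).2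
    exact add_le_add h1 h2
  have hr : ∀ k, Real.sqrt (E.Qb (c k) (c k)) ≤ ε' * (1 / 2) ^ k := by
    intro k
    rw [E.Qb_self]
    have h0 : (0 : ℝ) ≤ ε' * (1 / 2) ^ k := by positivity
    calc Real.sqrt (graphNormSq μ E.q (c k))
        ≤ Real.sqrt ((ε' * (1 / 2) ^ k) ^ 2) := Real.sqrt_le_sqrt (hcnorm k).le
      _ = ε' * (1 / 2) ^ k := by rw [Real.sqrt_sq h0]
  -- partial sums
  set S : ℕ → X → ℝ := fun m => ∑ k ∈ Finset.range (m + 1), c k with hSdef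
  have hSmem : ∀ m, S m ∈ E.dom := fun m => E.sum_mem' c hcdom _
  have hSsub : ∀ {m n : ℕ}, n ≤ m → S m - S n = ∑ k ∈ Finset.Ico (n + 1) (m + 1), c k := by
    intro m n hnm
    rw [Finset.sum_Ico_eq_sub _ (by omega)]
  have hQseg : ∀ m n : ℕ, n ≤ m →
      E.Qb (S m - S n) (S m - S n) ≤ (2 * ε' * (1 / 2) ^ (n + 1)) ^ 2 := by
    intro m n hnm
    rw [hSsub hnm]
    have h1 : Real.sqrt (E.Qb (∑ k ∈ Finset.Ico (n + 1) (m + 1), c k)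
        (∑ k ∈ Finset.Ico (n + 1) (m + 1), c k))
        ≤ ∑ k ∈ Finset.Ico (n + 1) (m + 1), Real.sqrt (E.Qb (c k) (c k)) :=
      E.Qb_sqrt_sum_le c hcdom _
    have h2 : ∑ k ∈ Finset.Ico (n + 1) (m + 1), Real.sqrt (E.Qb (c k) (c k))
        ≤ 2 * ε' * (1 / 2) ^ (n + 1) := by
      calc ∑ k ∈ Finset.Ico (n + 1) (m + 1), Real.sqrt (E.Qb (c k) (c k))
          ≤ ∑ k ∈ Finset.Ico (n + 1) (m + 1), ε' * (1 / 2) ^ k :=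
            Finset.sum_le_sum fun k _ => hr k
        _ ≤ 2 * ε' * (1 / 2) ^ (n + 1) := geom_tail_le ε' hε'.le _ _
    have hQnn : 0 ≤ E.Qb (∑ k ∈ Finset.Ico (n + 1) (m + 1), c k)
        (∑ k ∈ Finset.Ico (n + 1) (m + 1), c k) :=
      E.Qb_nonneg (E.sum_mem' c hcdom _)
    have := Real.sqrt_le_sqrt (le_refl (E.Qb (∑ k ∈ Finset.Ico (n + 1) (m + 1), c k)
      (∑ k ∈ Finset.Ico (n + 1) (m + 1), c k)))
    nlinarith [Real.sq_sqrt hQnn, Real.sqrt_nonneg (E.Qb (∑ k ∈ Finset.Ico (n + 1) (m + 1), c k)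
      (∑ k ∈ Finset.Ico (n + 1) (m + 1), c k)), h1, h2, Real.sqrt_nonneg (0:ℝ)]
  -- L² convergence of the partial sums
  have hSLp : ∀ m, MemLp (S m) 2 μ := fun m => E.dom_memLp _ (hSmem m)
  set SL : ℕ → Lp ℝ 2 μ := fun m => (hSLp m).toLp (S m) with hSLdef
  have hstep : ∀ n : ℕ, dist (SL n) (SL (n + 1)) ≤ (ε' / 2) * (1 / 2) ^ n := by
    intro n
    have hsub : S (n + 1) - S n = c (n + 1) := by
      rw [hSsub (Nat.le_succ n)]
      rw [Nat.Ico_succ_singleton, Finset.sum_singleton]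
    have h1 : dist (SL n) (SL (n + 1)) = ‖SL (n + 1) - SL n‖ := by
      rw [dist_eq_norm, norm_sub_rev]
    have h2 : SL (n + 1) - SL n = ((hSLp (n + 1)).sub (hSLp n)).toLp (S (n + 1) - S n) := by
      rw [MemLp.toLp_sub]
    have h3 : ‖((hSLp (n + 1)).sub (hSLp n)).toLp (S (n + 1) - S n)‖
        = (eLpNorm (S (n + 1) - S n) 2 μ).toReal := Lp.norm_toLp _ _
    have h4 : (eLpNorm (S (n + 1) - S n) 2 μ).toReal ≤ ε' * (1 / 2) ^ (n + 1) := by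
      rw [hsub]
      exact le_trans (eLpNorm_toReal_le_sqrt_Qb E (hcdom (n + 1))) (hr (n + 1))
    rw [h1, h2, h3]
    calc (eLpNorm (S (n + 1) - S n) 2 μ).toReal ≤ ε' * (1 / 2) ^ (n + 1) := h4
      _ = (ε' / 2) * (1 / 2) ^ n := by ring
  have hcauchy : CauchySeq SL :=
    cauchySeq_of_le_geometric (1 / 2) (ε' / 2) (by norm_num) hstep
  obtain ⟨G, hG⟩ := cauchySeq_tendsto_of_complete hcauchy
  set Φ : X → ℝ := ⇑G with hΦdef
  have hΦmem : MemLp Φ 2 μ := Lp.memLp G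
  have hcoe : ∀ m, eLpNorm (S m - Φ) 2 μ = ENNReal.ofReal ‖SL m - G‖ := by
    intro m
    have h1 : (fun x => S m x - Φ x) =ᵐ[μ] ⇑(SL m - G) := by
      filter_upwards [Lp.coeFn_sub (SL m) G, MemLp.coeFn_toLp (hSLp m)] with x h2x h3x
      rw [h2x, Pi.sub_apply, h3x]
    have h2 : eLpNorm (S m - Φ) 2 μ = eLpNorm (⇑(SL m - G)) 2 μ := eLpNorm_congr_ae h1
    rw [h2, Lp.norm_def, ENNReal.ofReal_toReal (Lp.eLpNorm_ne_top _)]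
  have hL2conv : Tendsto (fun m => eLpNorm (S m - Φ) 2 μ) atTop (𝓝 0) := by
    have h1 : Tendsto (fun m => ‖SL m - G‖) atTop (𝓝 0) := by
      have := tendsto_iff_dist_tendsto_zero.mp hG
      simpa [dist_eq_norm] using this
    have h2 : Tendsto (fun m => ENNReal.ofReal ‖SL m - G‖) atTop (𝓝 (ENNReal.ofReal 0)) :=
      (ENNReal.continuous_ofReal.tendsto 0).comp h1
    rw [ENNReal.ofReal_zero] at h2
    exact h2.congr fun m => (hcoe m).symm
  -- the q-Cauchy property
  have hqcauchy : ∀ εq > 0, ∃ N, ∀ m ≥ N, ∀ n ≥ N,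
      E.form (S m - S n) (S m - S n) < εq := by
    intro εq hεq
    have htend : Tendsto (fun N : ℕ => (2 * ε' * (1 / 2 : ℝ) ^ (N + 1)) ^ 2) atTop (𝓝 0) := by
      have h2 : Tendsto (fun N : ℕ => ((1 : ℝ) / 2) ^ N) atTop (𝓝 0) :=
        tendsto_pow_atTop_nhds_zero_of_lt_one (by norm_num) (by norm_num)
      have h3 := h2.const_mul ((2 : ℝ) * ε' * (1 / 2))
      rw [mul_zero] at h3
      have h4 : Tendsto (fun N : ℕ => 2 * ε' * (1 / 2 : ℝ) ^ (N + 1)) atTop (𝓝 0) := by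
        refine h3.congr fun N => ?_
        rw [pow_succ]
        ring
      have h5 := h4.pow 2
      simpa using h5
    obtain ⟨N, hN⟩ := (htend.eventually_lt_const hεq).exists
    refine ⟨N, fun m hm n hn => ?_⟩
    have hmono : ∀ {m' n' : ℕ}, N ≤ n' → n' ≤ m' →
        E.form (S m' - S n') (S m' - S n') < εq := by
      intro m' n' hNn hnm
      have h1 : E.form (S m' - S n') (S m' - S n') ≤ E.Qb (S m' - S n') (S m' - S n') :=
        le_add_of_nonneg_left (integral_nonneg fun x => mul_self_nonneg _)
      have h2 := hQseg m' n' hnm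
      have h3 : (2 * ε' * (1 / 2 : ℝ) ^ (n' + 1)) ^ 2 ≤ (2 * ε' * (1 / 2 : ℝ) ^ (N + 1)) ^ 2 := by
        have hp : ((1 : ℝ) / 2) ^ (n' + 1) ≤ (1 / 2 : ℝ) ^ (N + 1) :=
          pow_le_pow_of_le_one (by norm_num) (by norm_num) (by omega)
        have hq : (0 : ℝ) ≤ ((1 : ℝ) / 2) ^ (n' + 1) := by positivity
        have hprod := mul_le_mul hp hp hq (by positivity)
        nlinarith [hprod, sq_nonneg ε']
      exact lt_of_le_of_lt (h1.trans (h2.trans h3)) hN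
    rcases le_total n m with hnm | hmn
    · exact hmono hn hnm
    · have hneg : S m - S n = -(S n - S m) := by rw [neg_sub]
      have : E.form (S m - S n) (S m - S n) = E.form (S n - S m) (S n - S m) := by
        rw [hneg]
        exact E.q_neg (E.sub_mem' (hSmem n) (hSmem m))
      rw [this]
      exact hmono hm hmn
  obtain ⟨hΦdom, hqconv⟩ := E.closed S Φ hSmem hΦmem hL2conv hqcauchy
  -- almost-everywhere lower bound on the union of the V k
  have htim : TendstoInMeasure μ S atTop Φ :=
    tendstoInMeasure_of_tendsto_eLpNorm (by norm_num)
      (fun m => (hSLp m).aestronglyMeasurable) hΦmem.aestronglyMeasurable hL2conv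
  obtain ⟨ns, hns_mono, hae_sub⟩ := htim.exists_seq_tendsto_ae
  have hone : ∀ᵐ x ∂μ, ∀ k : ℕ, x ∈ V k ∩ Ω → 1 ≤ c k x := by
    rw [ae_all_iff]
    intro k
    filter_upwards [hVae k] with x hx hmem
    exact le_of_eq (cut_eq_one (hx hmem)).symm
  have hfinal_ae : ∀ᵐ x ∂μ, x ∈ (⋃ k, V k) ∩ Ω → 1 ≤ Φ x := by
    filter_upwards [hae_sub, hone] with x hconv h1 hmem
    obtain ⟨hxV, hxΩ⟩ := hmem
    obtain ⟨k, hk⟩ := Set.mem_iUnion.mp hxV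
    have hck : 1 ≤ c k x := h1 k ⟨hk, hxΩ⟩
    have hSge : ∀ m, k ≤ m → 1 ≤ S m x := by
      intro m hm
      have hle : c k x ≤ S m x := by
        have hx2 : S m x = ∑ j ∈ Finset.range (m + 1), c j x := by
          rw [hSdef]
          exact Finset.sum_apply x (Finset.range (m + 1)) c
        rw [hx2]
        exact Finset.single_le_sum (fun j _ => cut_nonneg (φ j) x)
          (Finset.mem_range.mpr (by omega))
      linarith
    refine ge_of_tendsto hconv ?_
    filter_upwards [hns_mono.tendsto_atTop.eventually_ge_atTop k] with j hj
    exact hSge (ns j) hj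
  -- graph-norm bound
  have hQS : ∀ m, Real.sqrt (E.Qb (S m) (S m)) ≤ 2 * ε' := by
    intro m
    calc Real.sqrt (E.Qb (S m) (S m))
        ≤ ∑ k ∈ Finset.range (m + 1), Real.sqrt (E.Qb (c k) (c k)) :=
          E.Qb_sqrt_sum_le c hcdom _
      _ ≤ ∑ k ∈ Finset.range (m + 1), ε' * (1 / 2) ^ k :=
          Finset.sum_le_sum fun k _ => hr k
      _ ≤ 2 * ε' := by
          rw [← Finset.mul_sum]
          have := sum_geometric_two_le (m + 1)
          nlinarith
  have hQdiff : Tendsto (fun m => E.Qb (Φ - S m) (Φ - S m)) atTop (𝓝 0) := by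
    have heq1 : ∀ m, E.Qb (Φ - S m) (Φ - S m)
        = ((eLpNorm (S m - Φ) 2 μ).toReal) ^ 2 + E.q (S m - Φ) := by
      intro m
      have ha : ∫ x, (Φ - S m) x * (Φ - S m) x ∂μ
          = ((eLpNorm (S m - Φ) 2 μ).toReal) ^ 2 := by
        rw [← eLpNorm_sub_comm, ← integral_mul_self_eq (hΦmem.sub (hSLp m))]
      have hb : E.form (Φ - S m) (Φ - S m) = E.q (S m - Φ) := by
        have hneg : Φ - S m = -(S m - Φ) := by rw [neg_sub]
        rw [hneg]
        exact E.q_neg (E.sub_mem' (hSmem m) hΦdom)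
      unfold DirichletForm.Qb
      rw [ha, hb]
    have h1 : Tendsto (fun m => ((eLpNorm (S m - Φ) 2 μ).toReal) ^ 2) atTop (𝓝 0) := by
      have h2 : Tendsto (fun m => (eLpNorm (S m - Φ) 2 μ).toReal) atTop (𝓝 0) := by
        have := (ENNReal.tendsto_toReal (ENNReal.zero_ne_top)).comp hL2conv
        simpa [Function.comp_def] using this
      have := h2.pow 2
      simpa using this
    have h2 : Tendsto (fun m => ((eLpNorm (S m - Φ) 2 μ).toReal) ^ 2 + E.q (S m - Φ))
        atTop (𝓝 (0 + 0)) := h1.add hqconv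
    rw [add_zero] at h2
    exact h2.congr fun m => (heq1 m).symm
  have hQΦ : Real.sqrt (E.Qb Φ Φ) ≤ 2 * ε' := by
    have key : ∀ m, Real.sqrt (E.Qb Φ Φ)
        ≤ Real.sqrt (E.Qb (Φ - S m) (Φ - S m)) + 2 * ε' := by
      intro m
      have hsplit : Φ = (Φ - S m) + S m := (sub_add_cancel Φ (S m)).symm
      calc Real.sqrt (E.Qb Φ Φ)
          = Real.sqrt (E.Qb ((Φ - S m) + S m) ((Φ - S m) + S m)) := by rw [← hsplit]
        _ ≤ Real.sqrt (E.Qb (Φ - S m) (Φ - S m)) + Real.sqrt (E.Qb (S m) (S m)) :=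
            E.Qb_sqrt_add_le (E.sub_mem' hΦdom (hSmem m)) (hSmem m)
        _ ≤ Real.sqrt (E.Qb (Φ - S m) (Φ - S m)) + 2 * ε' := by linarith [hQS m]
    have hlim : Tendsto (fun m => Real.sqrt (E.Qb (Φ - S m) (Φ - S m)) + 2 * ε')
        atTop (𝓝 (Real.sqrt 0 + 2 * ε')) :=
      ((Real.continuous_sqrt.tendsto 0).comp hQdiff).add tendsto_const_nhds
    rw [Real.sqrt_zero, zero_add] at hlim
    exact ge_of_tendsto hlim (Filter.Eventually.of_forall key)
  have hgn : graphNormSq μ E.q Φ ≤ (2 * ε') ^ 2 := by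
    rw [← E.Qb_self]
    have h0 := E.Qb_nonneg hΦdom
    nlinarith [Real.sq_sqrt h0, hQΦ, Real.sqrt_nonneg (E.Qb Φ Φ)]
  refine ⟨Φ, hΦdom, ⋃ k, V k, isOpen_iUnion hVopen, ?_, hfinal_ae, hgn⟩
  intro x hx
  obtain ⟨k, hk⟩ := Set.mem_iUnion.mp (hKcover hx)
  exact Set.mem_iUnion.mpr ⟨k, hKV k hk⟩

end Aux10

section Statements

variable [MetricSpace X] [BorelSpace X] [LocallyCompactSpace X] [SigmaCompactSpace X]
variable {μ : Measure X} [Measure.Regular μ] [Measure.IsOpenPosMeasure μ]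

/-- If `S^D_t φ = S^N_t φ` for all `φ ∈ L₂(Ω)` and `t > 0`, then `L₂(Ω)` is
`S^N`-invariant and `cap_Ω(∂Ω) = 0`. -/
theorem statement10 (E : DirichletForm μ) (hloc : IsLocal E) (hdense : DenseInC0 E)
    (Ω : Set X) (hΩ : IsOpen Ω) (SD SN : ℝ → (X → ℝ) → (X → ℝ))
    (hSD : IsSubmarkovSemigroupOn μ Ω (E.domD Ω) E.q SD)
    (hSN : IsSubmarkovSemigroupOn μ Set.univ (relaxDom μ E.dom (neumann E Ω))
      (relaxQ μ E.dom (neumann E Ω)) SN)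
    (heq : ∀ t > 0, ∀ φ : X → ℝ, MemL2 μ Ω φ → SD t φ =ᵐ[μ] SN t φ) :
    (∀ t > 0, ∀ φ : X → ℝ, MemL2 μ Ω φ → SN t φ =ᵐ[μ] Ω.indicator (SN t φ)) ∧
    relCap μ E.dom E.q Ω (frontier Ω) = 0 := by
  constructor
  · intro t ht φ hφ
    exact SN_invariant hSD heq ht hφ
  · have hle : ∀ ε' : ℝ, 0 < ε' →
        relCap μ E.dom E.q Ω (frontier Ω) ≤ ENNReal.ofReal ((2 * ε') ^ 2) := by
      intro ε' hε'
      obtain ⟨φ, hφdom, V, hVopen, hVfr, hae, hgn⟩ :=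
        global_witness hdense hΩ hSD hSN heq hε'
      have hmem : ENNReal.ofReal (graphNormSq μ E.q φ) ∈
          {r : ℝ≥0∞ | ∃ φ ∈ E.dom, ∃ V : Set X, IsOpen V ∧ frontier Ω ⊆ V ∧
            (∀ᵐ x ∂μ, x ∈ V ∩ Ω → 1 ≤ φ x) ∧
            r = ENNReal.ofReal (graphNormSq μ E.q φ)} :=
        ⟨φ, hφdom, V, hVopen, hVfr, hae, rfl⟩
      exact le_trans (sInf_le hmem) (ENNReal.ofReal_le_ofReal hgn)
    refine le_antisymm ?_ zero_le
    refine ENNReal.le_of_forall_pos_le_add fun ν hν _ => ?_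
    have hν' : (0 : ℝ) < (ν : ℝ) := hν
    set ε' := Real.sqrt ν / 2 with hε'def
    have hε' : 0 < ε' := by
      have := Real.sqrt_pos.mpr hν'
      positivity
    have hsq : (2 * ε') ^ 2 = (ν : ℝ) := by
      rw [hε'def]
      have := Real.sq_sqrt hν'.le
      nlinarith [this]
    have := hle ε' hε'
    rw [hsq, ENNReal.ofReal_coe_nnreal] at this
    rwa [zero_add]

end Statements

end DirichletPaper
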